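/- The maximization of ∑_{k=1}^{2^j} (-1)^{β[k]} α[k] over codewords β of the form β[(k-1)2^{j-r}+1 : k·2^{j-r}] = β_src[k] ⊕ s_l (for β_src ∈ C and s_l in a finite set S of binary sequences of length 2^{j-r}) equals the maximization over (β_src, l) of ∑_{k=1}^{2^r} (-1)^{β_src[k]} α'_l[k], where α'_l[k] = ∑_{m=1}^{2^{j-r}} α[(k-1)2^{j-r}+m]·(-1)^{s_l[m]}. -/

import Mathlib

lemma neg_one_pow_zmod2_add (a b : ZMod 2) :
    (-1 : ℝ) ^ ((a + b).val) = (-1 : ℝ) ^ a.val * (-1 : ℝ) ^ b.val := by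
  fin_cases a <;> fin_cases b
  · show (-1 : ℝ) ^ ((0 + 0 : ZMod 2).val) = (-1 : ℝ) ^ (0 : ZMod 2).val * (-1 : ℝ) ^ (0 : ZMod 2).val
    simp
  · show (-1 : ℝ) ^ ((0 + 1 : ZMod 2).val) = (-1 : ℝ) ^ (0 : ZMod 2).val * (-1 : ℝ) ^ (1 : ZMod 2).val
    simp [ZMod.val_one]
  · show (-1 : ℝ) ^ ((1 + 0 : ZMod 2).val) = (-1 : ℝ) ^ (1 : ZMod 2).val * (-1 : ℝ) ^ (0 : ZMod 2).val
    simp [ZMod.val_one]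
  · show (-1 : ℝ) ^ ((1 + 1 : ZMod 2).val) = (-1 : ℝ) ^ (1 : ZMod 2).val * (-1 : ℝ) ^ (1 : ZMod 2).val
    simp [show ((1:ZMod 2)+1) = 0 from rfl, ZMod.val_one]

/-- Equation (24): the ML maximization `∑ₖ (-1)^{β[k]} α[k]` over codewords of the form
`β[(k-1)2^{j-r}+1 : k·2^{j-r}] = β_src[k] ⊕ s_l` (with `β_src ∈ C` and `s_l ∈ S`) equals the
maximization over pairs `(β_src, l)` of `∑ₖ (-1)^{β_src[k]} α'_l[k]`, where
`α'_l[k] = ∑ₘ α[(k-1)2^{j-r}+m]·(-1)^{s_l[m]}`. -/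
theorem srnode_ml_decomposition {j r : ℕ} (hr : r ≤ j)
    (h : 2 ^ r * 2 ^ (j - r) = 2 ^ j)
    (α : Fin (2 ^ j) → ℝ)
    (C : Finset (Fin (2 ^ r) → ZMod 2)) (S : Finset (Fin (2 ^ (j - r)) → ZMod 2))
    (hCS : (C ×ˢ S).Nonempty) :
    ((C ×ˢ S).sup' hCS fun bs =>
        ∑ x : Fin (2 ^ j),
          (-1 : ℝ) ^ ((bs.1 (finProdFinEquiv.symm (Fin.cast h.symm x)).1
              + bs.2 (finProdFinEquiv.symm (Fin.cast h.symm x)).2).val) * α x)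
      = (C ×ˢ S).sup' hCS fun bs =>
          ∑ k : Fin (2 ^ r), (-1 : ℝ) ^ ((bs.1 k).val) *
            ∑ m : Fin (2 ^ (j - r)),
              α (Fin.cast h (finProdFinEquiv (k, m))) * (-1 : ℝ) ^ ((bs.2 m).val) := by
  refine Finset.sup'_congr hCS rfl fun bs _ => ?_
  rw [← Equiv.sum_comp (finProdFinEquiv.trans (finCongr h))]
  rw [Fintype.sum_prod_type]
  refine Finset.sum_congr rfl fun k _ => ?_
  rw [Finset.mul_sum]
  refine Finset.sum_congr rfl fun m _ => ?_
  have key : finProdFinEquiv.symm (Fin.cast h.symm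
      ((finProdFinEquiv.trans (finCongr h)) (k, m))) = (k, m) := by
    have : Fin.cast h.symm ((finProdFinEquiv.trans (finCongr h)) (k, m))
        = finProdFinEquiv (k, m) := rfl
    rw [this, Equiv.symm_apply_apply]
  have he : (finProdFinEquiv.trans (finCongr h)) (k, m)
      = Fin.cast h (finProdFinEquiv (k, m)) := rfl
  rw [key, he, neg_one_pow_zmod2_add]
  ring
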